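/- Let C be a class of groups such that (P1) every subgroup of any finitely generated right-angled Artin group belongs to C, and (P2) C is closed under extensions. Let Γ be a finite simplicial graph and G_Γ the graph product of countable groups {G_i}. If each G_i ∈ C, then G_Γ ∈ C. -/

import Mathlib

open Monoid
open scoped commutatorElement

namespace GPaper

variable {ι : Type*}

/-- The relator subgroup of the graph product: normal closure of commutators of
elements of vertex groups at adjacent vertices. -/
def Rels (Γ : SimpleGraph ι) (G : ι → Type*) [∀ i, Group (G i)] : Subgroup (Monoid.CoprodI G) :=
  Subgroup.normalClosure
    { x | ∃ (i j : ι) (g : G i) (h : G j), Γ.Adj i j ∧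
          x = ⁅Monoid.CoprodI.of g, Monoid.CoprodI.of h⁆ }

instance (Γ : SimpleGraph ι) (G : ι → Type*) [∀ i, Group (G i)] : (Rels Γ G).Normal :=
  Subgroup.normalClosure_normal

/-- The graph product of the groups `G i` over the simplicial graph `Γ`. -/
abbrev GP (Γ : SimpleGraph ι) (G : ι → Type*) [∀ i, Group (G i)] :=
  Monoid.CoprodI G ⧸ Rels Γ G

/-- The canonical inclusion of a vertex group into the graph product. -/
def of (Γ : SimpleGraph ι) (G : ι → Type*) [∀ i, Group (G i)] (i : ι) : G i →* GP Γ G :=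
  (QuotientGroup.mk' (Rels Γ G)).comp Monoid.CoprodI.of

/-- The canonical homomorphism from the graph product to the direct product. -/
def proj [DecidableEq ι] (Γ : SimpleGraph ι) (G : ι → Type*) [∀ i, Group (G i)] :
    GP Γ G →* (∀ i, G i) :=
  QuotientGroup.lift (Rels Γ G) (Monoid.CoprodI.lift (fun i => MonoidHom.mulSingle G i)) (by
    intro x hx
    refine Subgroup.normalClosure_le_normal ?_ hx
    rintro y ⟨i, j, g, h, hadj, rfl⟩
    have hij : i ≠ j := hadj.ne
    simp only [SetLike.mem_coe, MonoidHom.mem_ker, map_commutatorElement,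
      Monoid.CoprodI.lift_of]
    rw [commutatorElement_eq_one_iff_commute]
    exact Pi.mulSingle_commute hij g h)

/-- The canonical epimorphism `G_Γ → G_Γ'` when `Γ'` is obtained from `Γ` by adding edges. -/
def mapGraph (Γ Γ' : SimpleGraph ι) (hΓ : Γ ≤ Γ') (G : ι → Type*) [∀ i, Group (G i)] :
    GP Γ G →* GP Γ' G :=
  QuotientGroup.lift (Rels Γ G) (QuotientGroup.mk' (Rels Γ' G)) (by
    intro x hx
    rw [QuotientGroup.ker_mk']
    refine Subgroup.normalClosure_le_normal ?_ hx
    rintro y ⟨i, j, g, h, hadj, rfl⟩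
    exact Subgroup.subset_normalClosure ⟨i, j, g, h, hΓ hadj, rfl⟩)

/-- The element of the graph product represented by a word (list of syllables). -/
def wordProd (Γ : SimpleGraph ι) (G : ι → Type*) [∀ i, Group (G i)]
    (w : List (Σ i, G i)) : GP Γ G :=
  (w.map fun s => of Γ G s.1 s.2).prod

/-- The image of a word in the direct product of the vertex groups. -/
def piProd [DecidableEq ι] (G : ι → Type*) [∀ i, Group (G i)]
    (w : List (Σ i, G i)) : ∀ i, G i :=
  (w.map fun s => Pi.mulSingle s.1 s.2).prod

/-- The ordered product of those syllables of a word that belong to `G i`. -/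
def sylProd [DecidableEq ι] (G : ι → Type*) [∀ i, Group (G i)]
    (w : List (Σ i, G i)) (i : ι) : G i :=
  (w.filterMap fun s => if h : s.1 = i then some (cast (congrArg G h) s.2) else none).prod

/-- The normal (syllable) length of an element of a graph product:
the minimal number of syllables in a word representing it. -/
noncomputable def nl (Γ : SimpleGraph ι) (G : ι → Type*) [∀ i, Group (G i)]
    (g : GP Γ G) : ℕ :=
  sInf { n | ∃ w : List (Σ i, G i), wordProd Γ G w = g ∧ w.length = n }

section Phi

open scoped Classical

variable [DecidableEq ι] {G G' : ι → Type*} [∀ i, Group (G i)] [∀ i, Group (G' i)]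

/-- One step of the recursive construction of `Φ`: the new syllable
`f(π(w))⁻¹ · f(π(w)s)` (dropped if trivial), where `g = π(w)`. -/
noncomputable def phiStep (f : ∀ i, G i → G' i) (g : ∀ i, G i) (s : Σ i, G i) : List (Σ i, G' i) :=
  if (f s.1 (g s.1))⁻¹ * f s.1 (g s.1 * s.2) = 1 then []
  else [⟨s.1, (f s.1 (g s.1))⁻¹ * f s.1 (g s.1 * s.2)⟩]

/-- Auxiliary recursion: process the word left to right, carrying the
image `g` of the prefix in the direct product. -/
noncomputable def phiAux (f : ∀ i, G i → G' i) : (∀ i, G i) → List (Σ i, G i) → List (Σ i, G' i)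
  | _, [] => []
  | g, s :: w => phiStep f g s ++ phiAux f (g * Pi.mulSingle s.1 s.2) w

/-- The word map `Φ : S* → S'*` induced by the set maps `f i : G i → G' i`. -/
noncomputable def phiWord (f : ∀ i, G i → G' i) (w : List (Σ i, G i)) : List (Σ i, G' i) :=
  phiAux f 1 w

end Phi


set_option linter.unusedSectionVars false

section Act

variable [DecidableEq ι] (Γ : SimpleGraph ι) {G G' : ι → Type*}
  [∀ i, Group (G i)] [∀ i, Group (G' i)]

/-- An induction principle for graph products. -/
theorem gp_ind {P : GP Γ G → Prop} (h1 : P 1) (hof : ∀ (i : ι) (g : G i), P (of Γ G i g))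
    (hmul : ∀ x y, P x → P y → P (x * y)) : ∀ k, P k := by
  intro k
  refine QuotientGroup.induction_on k ?_
  intro z
  induction z using Monoid.CoprodI.induction_on with
  | one => exact h1
  | of i g => exact hof i g
  | mul x y hx hy => exact hmul _ _ hx hy

theorem of_comm {i j : ι} (h : Γ.Adj i j) (a : G i) (b : G j) :
    Commute (of Γ G i a) (of Γ G j b) := by
  rw [← commutatorElement_eq_one_iff_commute]
  show (QuotientGroup.mk' (Rels Γ G)) ⁅Monoid.CoprodI.of a, Monoid.CoprodI.of b⁆ = 1
  rw [QuotientGroup.mk'_apply, QuotientGroup.eq_one_iff]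
  exact Subgroup.subset_normalClosure ⟨i, j, a, b, h, rfl⟩

theorem proj_of (i : ι) (g : G i) : proj Γ G (of Γ G i g) = Pi.mulSingle i g := by
  simp [proj, of]

variable (f : ∀ i, G i → G' i)

/-- One step of the action associated to the family of set maps `f`. -/
def step (i : ι) (g : G i) (x : (∀ j, G j) × GP Γ G') : (∀ j, G j) × GP Γ G' :=
  (x.1 * Pi.mulSingle i g, x.2 * of Γ G' i ((f i (x.1 i))⁻¹ * f i (x.1 i * g)))

theorem step_one (i : ι) (x : (∀ j, G j) × GP Γ G') : step Γ f i 1 x = x := by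
  simp [step]

theorem step_mul (i : ι) (g h : G i) (x : (∀ j, G j) × GP Γ G') :
    step Γ f i h (step Γ f i g x) = step Γ f i (g * h) x := by
  unfold step
  refine Prod.ext ?_ ?_
  · simp [mul_assoc, ← Pi.mulSingle_mul]
  · simp only [Pi.mul_apply, Pi.mulSingle_eq_same, mul_assoc, ← map_mul]
    congr 2
    group

theorem step_comm {i j : ι} (h : Γ.Adj i j) (g : G i) (g' : G j)
    (x : (∀ j, G j) × GP Γ G') :
    step Γ f j g' (step Γ f i g x) = step Γ f i g (step Γ f j g' x) := by
  have hij : i ≠ j := h.ne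
  unfold step
  refine Prod.ext ?_ ?_
  · simp only [mul_assoc]
    congr 1
    exact (Pi.mulSingle_commute hij g g').eq
  · have e1 : (x.1 * Pi.mulSingle i g) j = x.1 j := by
      simp [Pi.mulSingle_eq_of_ne (Ne.symm hij)]
    have e2 : (x.1 * Pi.mulSingle j g') i = x.1 i := by
      simp [Pi.mulSingle_eq_of_ne hij]
    show x.2 * of Γ G' i _ * of Γ G' j _ = x.2 * of Γ G' j _ * of Γ G' i _
    simp only [e1, e2, mul_assoc]
    congr 1
    exact (of_comm Γ h _ _).eq

/-- The permutation given by one syllable. -/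
def stepPerm (i : ι) (g : G i) : Equiv.Perm ((∀ j, G j) × GP Γ G') where
  toFun := step Γ f i g
  invFun := step Γ f i g⁻¹
  left_inv := fun x => by rw [step_mul, mul_inv_cancel, step_one]
  right_inv := fun x => by rw [step_mul, inv_mul_cancel, step_one]

/-- The (right-)action of the free product, as a hom to the opposite permutation group. -/
def actC : Monoid.CoprodI G →* (Equiv.Perm ((∀ j, G j) × GP Γ G'))ᵐᵒᵖ :=
  Monoid.CoprodI.lift (fun i => MonoidHom.mk'
    (fun g => MulOpposite.op (stepPerm Γ f i g)) (by
      intro g h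
      show MulOpposite.op (stepPerm Γ f i (g * h)) =
        MulOpposite.op (stepPerm Γ f i g) * MulOpposite.op (stepPerm Γ f i h)
      rw [← MulOpposite.op_mul]
      refine congrArg MulOpposite.op (Equiv.ext fun x => ?_)
      rw [Equiv.Perm.mul_apply]
      exact (step_mul Γ f i g h x).symm))

theorem actC_rels : ∀ x ∈ Rels Γ G, actC Γ f x = 1 := by
  intro x hx
  have : Rels Γ G ≤ (actC Γ f).ker := by
    refine Subgroup.normalClosure_le_normal ?_
    rintro y ⟨i, j, g, h, hadj, rfl⟩
    simp only [SetLike.mem_coe, MonoidHom.mem_ker, map_commutatorElement]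
    rw [commutatorElement_eq_one_iff_commute]
    show Commute (Monoid.CoprodI.lift _ _) _
    simp only [actC, Monoid.CoprodI.lift_of, MonoidHom.mk'_apply]
    rw [Commute, SemiconjBy, ← MulOpposite.op_mul, ← MulOpposite.op_mul]
    congr 1
    refine Equiv.ext fun x => ?_
    rw [Equiv.Perm.mul_apply, Equiv.Perm.mul_apply]
    exact step_comm Γ f hadj g h x
  exact this hx

/-- The action of the graph product. -/
def actHom : GP Γ G →* (Equiv.Perm ((∀ j, G j) × GP Γ G'))ᵐᵒᵖ :=
  QuotientGroup.lift (Rels Γ G) (actC Γ f) (show Rels Γ G ≤ (actC Γ f).ker from actC_rels Γ f)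

/-- The right action of `GP Γ G` on `(∀ i, G i) × GP Γ G'` induced by `f`. -/
def act (k : GP Γ G) (x : (∀ j, G j) × GP Γ G') : (∀ j, G j) × GP Γ G' :=
  (actHom Γ f k).unop x

theorem act_one (x : (∀ j, G j) × GP Γ G') : act Γ f 1 x = x := by
  simp [act]

theorem act_mul (k₁ k₂ : GP Γ G) (x : (∀ j, G j) × GP Γ G') :
    act Γ f (k₁ * k₂) x = act Γ f k₂ (act Γ f k₁ x) := by
  simp [act, map_mul]

theorem act_of (i : ι) (g : G i) (x : (∀ j, G j) × GP Γ G') :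
    act Γ f (of Γ G i g) x = step Γ f i g x := by
  show (actHom Γ f ((QuotientGroup.mk' (Rels Γ G)) (Monoid.CoprodI.of g))).unop x = _
  rw [QuotientGroup.mk'_apply]
  show (QuotientGroup.lift _ (actC Γ f) _ (QuotientGroup.mk _)).unop x = _
  rw [QuotientGroup.lift_mk]
  simp [actC]
  rfl

theorem act_fst (k : GP Γ G) : ∀ x, (act Γ f k x).1 = x.1 * proj Γ G k := by
  induction k using gp_ind with
  | h1 => intro x; simp [act_one]
  | hof i g => intro x; rw [act_of, proj_of]; rfl
  | hmul a b ha hb => intro x; rw [act_mul, hb, ha, map_mul, mul_assoc]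

theorem act_snd (k : GP Γ G) : ∀ x, (act Γ f k x).2 = x.2 * (act Γ f k (x.1, 1)).2 := by
  induction k using gp_ind with
  | h1 => intro x; simp [act_one]
  | hof i g => intro x; rw [act_of, act_of]; rfl
  | hmul a b ha hb =>
    intro x
    have h1 : (act Γ f a x).1 = (act Γ f a (x.1, 1)).1 := by rw [act_fst, act_fst]
    rw [act_mul, hb (act Γ f a x), ha, h1, act_mul, hb (act Γ f a (x.1, 1)), mul_assoc]

/-- The cocycle `Ψ` associated to `f`. -/
def Psi (π : ∀ i, G i) (k : GP Γ G) : GP Γ G' := (act Γ f k (π, 1)).2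

theorem Psi_one (π : ∀ i, G i) : Psi Γ f π 1 = 1 := by simp [Psi, act_one]

theorem Psi_of (π : ∀ i, G i) (i : ι) (g : G i) :
    Psi Γ f π (of Γ G i g) = of Γ G' i ((f i (π i))⁻¹ * f i (π i * g)) := by
  rw [Psi, act_of]
  show 1 * _ = _
  rw [one_mul]

theorem Psi_mul (π : ∀ i, G i) (k₁ k₂ : GP Γ G) :
    Psi Γ f π (k₁ * k₂) = Psi Γ f π k₁ * Psi Γ f (π * proj Γ G k₁) k₂ := by
  unfold Psi
  rw [act_mul, act_snd Γ f k₂ (act Γ f k₁ (π, 1))]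
  have h1 : (act Γ f k₁ ((π, 1) : (∀ j, G j) × GP Γ G')).1 = π * proj Γ G k₁ :=
    act_fst Γ f k₁ _
  rw [h1]

theorem proj_Psi (k : GP Γ G) : ∀ π : ∀ i, G i,
    (fun i => f i (π i)) * proj Γ G' (Psi Γ f π k) = fun i => f i ((π * proj Γ G k) i) := by
  induction k using gp_ind with
  | h1 => intro π; simp [Psi_one]
  | hof i g =>
    intro π
    rw [Psi_of, proj_of]
    funext j
    by_cases hj : j = i
    · subst hj
      simp [proj_of]
    · simp [proj_of, Pi.mulSingle_eq_of_ne hj]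
  | hmul a b ha hb =>
    intro π
    rw [Psi_mul, map_mul, map_mul, ← mul_assoc, ha, hb, mul_assoc]

theorem psi_sim (r : ∀ i, G' i → G i) (hr : ∀ i x, r i (f i x) = x) (k : GP Γ G) :
    ∀ π : ∀ i, G i, Psi Γ r (fun i => f i (π i)) (Psi Γ f π k) = k := by
  induction k using gp_ind with
  | h1 => intro π; rw [Psi_one, Psi_one]
  | hof i g =>
    intro π
    rw [Psi_of, Psi_of]
    simp only [mul_inv_cancel_left, hr]
    rw [inv_mul_cancel_left]
  | hmul a b ha hb =>
    intro π
    rw [Psi_mul, Psi_mul Γ r, proj_Psi Γ f a π, ha π, hb (π * proj Γ G a)]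

theorem psi_injective (hf : ∀ i, Function.Injective (f i)) (π : ∀ i, G i)
    {k₁ k₂ : GP Γ G} (h : Psi Γ f π k₁ = Psi Γ f π k₂) : k₁ = k₂ := by
  classical
  have hne : ∀ i, Nonempty (G i) := fun i => ⟨1⟩
  let r : ∀ i, G' i → G i := fun i => Function.invFun (f i)
  have hr : ∀ i x, r i (f i x) = x := fun i => Function.leftInverse_invFun (hf i)
  calc k₁ = Psi Γ r (fun i => f i (π i)) (Psi Γ f π k₁) := (psi_sim Γ f r hr k₁ π).symm
    _ = Psi Γ r (fun i => f i (π i)) (Psi Γ f π k₂) := by rw [h]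
    _ = k₂ := psi_sim Γ f r hr k₂ π

/-- The homomorphism from the kernel of `proj` to `GP Γ G'` induced by set maps `f`. -/
def kerHom : ↥(proj Γ G).ker →* GP Γ G' :=
  MonoidHom.mk' (fun k => Psi Γ f 1 k.1) (by
    intro a b
    show Psi Γ f 1 ((a : GP Γ G) * b) = _
    rw [Psi_mul]
    have ha : proj Γ G (a : GP Γ G) = 1 := a.2
    rw [ha, mul_one])

theorem kerHom_injective (hf : ∀ i, Function.Injective (f i)) :
    Function.Injective (kerHom Γ f) := fun a b h =>
  Subtype.ext (psi_injective Γ f hf 1 h)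

theorem proj_surjective [Fintype ι] : Function.Surjective (proj Γ G) := by
  intro π
  have h : π ∈ (proj Γ G).range := by
    rw [← Finset.noncommProd_mulSingle π]
    refine Submonoid.noncommProd_mem (proj Γ G).range.toSubmonoid Finset.univ
      (fun i => Pi.mulSingle i (π i)) _ ?_
    intro i _
    exact ⟨of Γ G i (π i), proj_of Γ i (π i)⟩
  obtain ⟨x, hx⟩ := h
  exact ⟨x, hx⟩

end Act

section Transport

variable {κ : Type*} [DecidableEq ι] [DecidableEq κ] (e : ι ≃ κ) (Γ : SimpleGraph ι)
  (A : Type*) [Group A]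

/-- Transport of a simple graph along an equivalence of vertex sets. -/
def cGraph : SimpleGraph κ where
  Adj a b := Γ.Adj (e.symm a) (e.symm b)
  symm := ⟨fun a b h => h.symm⟩
  loopless := ⟨fun a h => Γ.loopless.irrefl _ h⟩

theorem cGraph_adj (i j : ι) : (cGraph e Γ).Adj (e i) (e j) ↔ Γ.Adj i j := by
  simp only [cGraph, Equiv.symm_apply_apply]

/-- Transport homomorphism for graph products of a constant family. -/
def transHom : GP Γ (fun _ : ι => A) →* GP (cGraph e Γ) (fun _ : κ => A) :=
  QuotientGroup.lift (Rels Γ (fun _ : ι => A))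
    (Monoid.CoprodI.lift fun i => of (cGraph e Γ) (fun _ : κ => A) (e i)) (by
    intro x hx
    refine Subgroup.normalClosure_le_normal ?_ hx
    rintro y ⟨i, j, g, h, hadj, rfl⟩
    simp only [SetLike.mem_coe, MonoidHom.mem_ker, map_commutatorElement,
      Monoid.CoprodI.lift_of]
    rw [commutatorElement_eq_one_iff_commute]
    exact of_comm (cGraph e Γ) (G := fun _ : κ => A) ((cGraph_adj e Γ i j).mpr hadj) g h)

/-- Inverse transport homomorphism. -/
def transInv : GP (cGraph e Γ) (fun _ : κ => A) →* GP Γ (fun _ : ι => A) :=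
  QuotientGroup.lift (Rels (cGraph e Γ) (fun _ : κ => A))
    (Monoid.CoprodI.lift fun a => of Γ (fun _ : ι => A) (e.symm a)) (by
    intro x hx
    refine Subgroup.normalClosure_le_normal ?_ hx
    rintro y ⟨i, j, g, h, hadj, rfl⟩
    simp only [SetLike.mem_coe, MonoidHom.mem_ker, map_commutatorElement,
      Monoid.CoprodI.lift_of]
    rw [commutatorElement_eq_one_iff_commute]
    exact of_comm Γ (G := fun _ : ι => A) (show Γ.Adj (e.symm i) (e.symm j) from hadj) g h)

theorem transHom_of (i : ι) (g : A) :
    transHom e Γ A (of Γ (fun _ : ι => A) i g) = of (cGraph e Γ) (fun _ : κ => A) (e i) g := by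
  show transHom e Γ A ((QuotientGroup.mk' _) (Monoid.CoprodI.of g)) = _
  rw [QuotientGroup.mk'_apply]
  show (QuotientGroup.lift _ _ _) (QuotientGroup.mk _) = _
  rw [QuotientGroup.lift_mk]
  rw [Monoid.CoprodI.lift_of]

theorem transInv_of (a : κ) (g : A) :
    transInv e Γ A (of (cGraph e Γ) (fun _ : κ => A) a g) = of Γ (fun _ : ι => A) (e.symm a) g := by
  show transInv e Γ A ((QuotientGroup.mk' _) (Monoid.CoprodI.of g)) = _
  rw [QuotientGroup.mk'_apply]
  show (QuotientGroup.lift _ _ _) (QuotientGroup.mk _) = _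
  rw [QuotientGroup.lift_mk]
  rw [Monoid.CoprodI.lift_of]

/-- Graph products of a constant family over equivalent graphs are isomorphic. -/
def transEquiv : GP Γ (fun _ : ι => A) ≃* GP (cGraph e Γ) (fun _ : κ => A) where
  toFun := transHom e Γ A
  invFun := transInv e Γ A
  left_inv := by
    refine gp_ind Γ ?_ ?_ ?_
    · rw [map_one, map_one]
    · intro i g
      rw [transHom_of, transInv_of, Equiv.symm_apply_apply]
    · intro x y hx hy
      rw [map_mul, map_mul, hx, hy]
  right_inv := by
    refine gp_ind (cGraph e Γ) ?_ ?_ ?_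
    · rw [map_one, map_one]
    · intro a g
      rw [transInv_of, transHom_of, Equiv.apply_symm_apply]
    · intro x y hx hy
      rw [map_mul, map_mul, hx, hy]
  map_mul' := map_mul _

end Transport

/-- `Pi` congruence along an equivalence of index types, as a `MulEquiv`. -/
def mulPiCongrLeft' {η η' : Type*} (M : η → Type*) [∀ i, Monoid (M i)] (e : η ≃ η') :
    (∀ i, M i) ≃* (∀ b, M (e.symm b)) :=
  { Equiv.piCongrLeft' M e with map_mul' := fun _ _ => rfl }

/-- A class of groups containing the trivial group and closed under extensions contains
all finite products of its members. -/
theorem C_pi (C : (H : Type) → [inst : Group H] → Prop)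
    (hiso : ∀ (H K : Type) [Group H] [Group K], (H ≃* K) → C H → C K)
    (htriv : C PUnit)
    (hP2 : ∀ (B : Type) [Group B] (A : Subgroup B) [A.Normal], C A → C (B ⧸ A) → C B) :
    ∀ (n : ℕ) (H : Fin n → Type) [∀ i, Group (H i)], (∀ i, C (H i)) → C (∀ i, H i) := by
  intro n
  induction n with
  | zero =>
    intro H instH _
    exact hiso PUnit _ MulEquiv.ofUnique htriv
  | succ n ih =>
    intro H instH hC
    let p : (∀ i, H i) →* (∀ i : Fin n, H i.succ) :=
      MonoidHom.mk' (fun π i => π i.succ) (fun a b => rfl)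
    have hsurj : Function.Surjective p := by
      intro σ
      refine ⟨Fin.cases 1 σ, funext fun i => ?_⟩
      simp [p]
    have hker : C ↥p.ker := by
      refine hiso (H 0) _ ?_ (hC 0)
      refine
        { toFun := fun x => ⟨Pi.mulSingle 0 x, ?_⟩
          invFun := fun k => k.1 0
          left_inv := fun x => Pi.mulSingle_eq_same 0 x
          right_inv := fun k => ?_
          map_mul' := fun x y => Subtype.ext ((MonoidHom.mulSingle H 0).map_mul x y) }
      · rw [MonoidHom.mem_ker]
        funext i
        exact Pi.mulSingle_eq_of_ne (Fin.succ_ne_zero i) x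
      · refine Subtype.ext (funext fun i => ?_)
        refine Fin.cases ?_ ?_ i
        · exact Pi.mulSingle_eq_same 0 (k.1 0)
        · intro j
          have hk : p k.1 = 1 := k.2
          have h1 : k.1 j.succ = 1 := congrFun hk j
          rw [h1]
          exact Pi.mulSingle_eq_of_ne (Fin.succ_ne_zero j) (k.1 0)
    have hquot : C ((∀ i, H i) ⧸ p.ker) := by
      have htail : C (∀ i : Fin n, H i.succ) := ih (fun i => H i.succ) (fun i => hC i.succ)
      exact hiso _ _ (QuotientGroup.quotientKerEquivOfSurjective p hsurj).symm htail
    exact hP2 (∀ i, H i) p.ker hker hquot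


/-- Let `C` be an isomorphism-invariant class of groups containing all
subgroups of finitely generated right-angled Artin groups (P1) and closed under
extensions (P2). If all (countable) vertex groups lie in `C`, then so does the graph
product. -/
theorem stmt14 (C : (H : Type) → [inst : Group H] → Prop)
    (hiso : ∀ (H K : Type) [Group H] [Group K], (H ≃* K) → C H → C K)
    (hP1 : ∀ (n : ℕ) (Γ' : SimpleGraph (Fin n))
      (H : Subgroup (GP Γ' (fun _ : Fin n => Multiplicative ℤ))), C H)
    (hP2 : ∀ (B : Type) [Group B] (A : Subgroup B) [A.Normal], C A → C (B ⧸ A) → C B)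
    {ι : Type} [DecidableEq ι] [Fintype ι] (Γ : SimpleGraph ι)
    (G : ι → Type) [∀ i, Group (G i)] [∀ i, Countable (G i)]
    (hG : ∀ i, C (G i)) :
    C (GP Γ G) := by
  classical
  have htriv : C PUnit := hiso _ _ MulEquiv.ofUnique
    (hP1 0 ⊥ (⊥ : Subgroup (GP (⊥ : SimpleGraph (Fin 0)) (fun _ : Fin 0 => Multiplicative ℤ))))
  set n := Fintype.card ι with hn
  let e : ι ≃ Fin n := Fintype.equivFin ι
  -- injections of the vertex groups into `ℤ`
  have hcnt : ∀ i, ∃ fi : G i → Multiplicative ℤ, Function.Injective fi := by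
    intro i
    obtain ⟨fi, hfi⟩ := exists_injective_nat (G i)
    refine ⟨fun g => Multiplicative.ofAdd ((fi g : ℤ)), ?_⟩
    intro a b hab
    exact hfi (Int.ofNat_inj.mp (Multiplicative.ofAdd.injective hab))
  choose f hfinj using hcnt
  -- the kernel of `proj` lies in `C`
  have hker : C ↥(proj Γ G).ker := by
    let φ : ↥(proj Γ G).ker →* GP Γ (fun _ : ι => Multiplicative ℤ) := kerHom Γ f
    let ψ : ↥(proj Γ G).ker →* GP (cGraph e Γ) (fun _ : Fin n => Multiplicative ℤ) :=
      (transEquiv e Γ (Multiplicative ℤ)).toMonoidHom.comp φ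
    have hinj : Function.Injective ψ :=
      (transEquiv e Γ (Multiplicative ℤ)).injective.comp (kerHom_injective Γ f hfinj)
    exact hiso _ _ (MonoidHom.ofInjective hinj).symm (hP1 n (cGraph e Γ) ψ.range)
  -- the direct product lies in `C`
  have hpi : C (∀ i, G i) := by
    have h1 : C (∀ b : Fin n, G (e.symm b)) :=
      C_pi C hiso htriv hP2 n (fun b => G (e.symm b)) (fun b => hG (e.symm b))
    exact hiso _ _ (mulPiCongrLeft' G e).symm h1
  have hquot : C (GP Γ G ⧸ (proj Γ G).ker) :=
    hiso _ _ (QuotientGroup.quotientKerEquivOfSurjective _ (proj_surjective Γ)).symm hpi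
  exact hP2 (GP Γ G) (proj Γ G).ker hker hquot


end GPaper
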